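/- If H is any graph of order t without isolated vertices and s ≥ 2, then the potential-Ramsey number satisfies r_pot(K_s, H) ≥ t + s - 2. In particular, the graphic sequence of G = K_{s-2} ∨ complement(K_{t-1}) (join of a clique on s-2 vertices with an independent set of size t-1), which has length t+s-3, is not potentially K_s-graphic and its complementary sequence is not potentially H-graphic. -/

import Mathlib

open SimpleGraph
open scoped Classical

/-- Degree of a vertex. -/
noncomputable def deg {V : Type} (G : SimpleGraph V) (v : V) : ℕ := Nat.card (G.neighborSet v)

/-- Number of vertices of degree exactly 1 (leaves for trees/forests). -/
noncomputable def numLeaves {V : Type} (G : SimpleGraph V) : ℕ := Nat.card {v : V // deg G v = 1}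

/-- Number of connected components containing at least one edge. -/
noncomputable def numEdgeComps {V : Type} (G : SimpleGraph V) : ℕ :=
  Nat.card {c : G.ConnectedComponent // ∃ v w : V, G.Adj v w ∧ G.connectedComponentMk v = c}

/-- Maximum degree. -/
noncomputable def maxDeg {V : Type} (G : SimpleGraph V) : ℕ := sSup (Set.range (deg G))

/-- `G` and `H` pack: a bijection sends edges of `H` to non-edges of `G`. -/
def Packs {V W : Type} (G : SimpleGraph V) (H : SimpleGraph W) : Prop :=
  ∃ f : W ≃ V, ∀ x y : W, H.Adj x y → ¬ G.Adj (f x) (f y)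

/-- `G` contains a copy of `H` as a subgraph. -/
def ContainsCopy {V W : Type} (G : SimpleGraph V) (H : SimpleGraph W) : Prop :=
  ∃ f : W ↪ V, ∀ x y : W, H.Adj x y → G.Adj (f x) (f y)

/-- `G` realizes the degree sequence `π`. -/
def IsRealization {n : ℕ} (G : SimpleGraph (Fin n)) (π : Fin n → ℕ) : Prop :=
  ∀ i, deg G i = π i

/-- `π` is a graphic sequence. -/
def Graphic {n : ℕ} (π : Fin n → ℕ) : Prop :=
  ∃ G : SimpleGraph (Fin n), IsRealization G π

/-- `π` is potentially `H`-graphic. -/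
def PotentiallyGraphic {n : ℕ} {W : Type} (π : Fin n → ℕ) (H : SimpleGraph W) : Prop :=
  ∃ G : SimpleGraph (Fin n), IsRealization G π ∧ ContainsCopy G H

/-- The complementary sequence `π̄ = (n-1-d_n, …, n-1-d_1)`. -/
def compSeq {n : ℕ} (π : Fin n → ℕ) : Fin n → ℕ := fun i => n - 1 - π i.rev

/-- The potential-Ramsey number. -/
noncomputable def rpot {W₁ W₂ : Type} (H₁ : SimpleGraph W₁) (H₂ : SimpleGraph W₂) : ℕ :=
  sInf {N : ℕ | ∀ π : Fin N → ℕ, Antitone π → Graphic π →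
    PotentiallyGraphic π H₁ ∨ PotentiallyGraphic (compSeq π) H₂}

/-- The star `K_{1,t-1}` on `t` vertices, centered at vertex `0`. -/
def starGraph (t : ℕ) : SimpleGraph (Fin t) := SimpleGraph.fromRel (fun i _ => (i : ℕ) = 0)

lemma deg_eq_degree {V : Type} [Fintype V] (G : SimpleGraph V) (v : V) :
    deg G v = G.degree v := by
  rw [deg, Nat.card_eq_fintype_card, card_neighborSet_eq_degree]

lemma deg_le_of_copy {V W : Type} [Fintype V] [Fintype W] {G : SimpleGraph V}
    {H : SimpleGraph W} (f : W ↪ V) (hf : ∀ x y : W, H.Adj x y → G.Adj (f x) (f y)) (w : W) :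
    deg H w ≤ deg G (f w) := by
  rw [deg, deg, Nat.card_coe_set_eq, Nat.card_coe_set_eq]
  have himg : f '' H.neighborSet w ⊆ G.neighborSet (f w) := by
    rintro _ ⟨x, hx, rfl⟩
    exact hf w x hx
  calc (H.neighborSet w).ncard = (f '' H.neighborSet w).ncard :=
        (Set.ncard_image_of_injective _ f.injective).symm
    _ ≤ (G.neighborSet (f w)).ncard := Set.ncard_le_ncard himg (Set.toFinite _)

lemma deg_top {s : ℕ} (v : Fin s) : deg (⊤ : SimpleGraph (Fin s)) v = s - 1 := by
  have h : (⊤ : SimpleGraph (Fin s)).neighborSet v = {v}ᶜ := by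
    ext w; simp [SimpleGraph.neighborSet, ne_comm, eq_comm]
  rw [deg, h, Nat.card_coe_set_eq]
  have := Set.ncard_add_ncard_compl ({v} : Set (Fin s))
  rw [Set.ncard_singleton, Nat.card_eq_fintype_card, Fintype.card_fin] at this
  omega

lemma potentially_bound {n m : ℕ} {W : Type} [Fintype W] {π : Fin n → ℕ}
    {H : SimpleGraph W} (hp : PotentiallyGraphic π H) (d : ℕ) (hd : ∀ w, d ≤ deg H w)
    (h : ∀ i : Fin n, d ≤ π i → (i : ℕ) < m) : Fintype.card W ≤ m := by
  obtain ⟨G, hreal, f, hf⟩ := hp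
  rw [← Finset.card_univ, ← Finset.card_range m]
  apply Finset.card_le_card_of_injOn (fun w => ((f w : Fin n) : ℕ))
  · intro w _
    rw [Finset.mem_coe, Finset.mem_range]
    apply h
    rw [← hreal (f w)]
    exact le_trans (hd w) (deg_le_of_copy f hf w)
  · exact Fin.val_injective.comp f.injective |>.injOn

lemma not_pot_Ks {s N a : ℕ} (hs : 2 ≤ s) (ha : a ≤ s - 2) :
    ¬ PotentiallyGraphic (fun i : Fin N => if (i : ℕ) < a then N - 1 else a)
      (⊤ : SimpleGraph (Fin s)) := by
  intro hp
  have h1 := potentially_bound (m := s - 2) hp (s - 1)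
    (fun v => le_of_eq (deg_top v).symm) ?_
  · rw [Fintype.card_fin] at h1
    omega
  · intro i hi
    by_contra hcon
    push_neg at hcon
    rw [if_neg (by omega)] at hi
    omega

lemma not_pot_H {t s N a : ℕ} {W : Type} [Fintype W] {H : SimpleGraph W}
    (hcard : Fintype.card W = t) (ht : 1 ≤ t) (hs : 2 ≤ s)
    (hiso : ∀ v : W, 0 < deg H v) (hN : N ≤ t + s - 3)
    (ha1 : a ≤ s - 2) (ha2 : a ≤ N) (ha3 : a = s - 2 ∨ a = N) :
    ¬ PotentiallyGraphic (compSeq (fun i : Fin N => if (i : ℕ) < a then N - 1 else a)) H := by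
  intro hp
  have h1 := potentially_bound (m := t - 1) hp 1 (fun w => hiso w) ?_
  · rw [hcard] at h1
    omega
  · intro i hi
    simp only [compSeq, Fin.val_rev] at hi
    have hiN : (i : ℕ) < N := i.isLt
    split at hi <;> omega

lemma antitone_pi {N a : ℕ} : Antitone (fun i : Fin N => if (i : ℕ) < a then N - 1 else a) := by
  intro i j hij
  have h1 : (i : ℕ) ≤ (j : ℕ) := hij
  have h2 : (j : ℕ) < N := j.isLt
  simp only
  split_ifs <;> omega

def finLtEquiv {N a : ℕ} (h : a ≤ N) : {j : Fin N // (j : ℕ) < a} ≃ Fin a where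
  toFun j := ⟨j.1, j.2⟩
  invFun k := ⟨⟨k, lt_of_lt_of_le k.2 h⟩, k.2⟩
  left_inv := by rintro ⟨⟨j, hj⟩, h2⟩; rfl
  right_inv := fun k => rfl

lemma graphic_pi {N a : ℕ} (ha : a ≤ N) :
    Graphic (fun i : Fin N => if (i : ℕ) < a then N - 1 else a) := by
  refine ⟨SimpleGraph.fromRel (fun i j => (i : ℕ) < a), fun i => ?_⟩
  simp only
  by_cases hi : (i : ℕ) < a
  · rw [if_pos hi]
    have hset : (SimpleGraph.fromRel (fun i j : Fin N => (i : ℕ) < a)).neighborSet i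
        = {i}ᶜ := by
      ext j
      simp only [SimpleGraph.mem_neighborSet, SimpleGraph.fromRel_adj, Set.mem_compl_iff,
        Set.mem_singleton_iff]
      constructor
      · rintro ⟨hne, _⟩ h; exact hne h.symm
      · intro h; exact ⟨fun h' => h h'.symm, Or.inl hi⟩
    rw [deg, hset, Nat.card_coe_set_eq]
    have := Set.ncard_add_ncard_compl ({i} : Set (Fin N))
    rw [Set.ncard_singleton, Nat.card_eq_fintype_card, Fintype.card_fin] at this
    omega
  · rw [if_neg hi]
    have hset : (SimpleGraph.fromRel (fun i j : Fin N => (i : ℕ) < a)).neighborSet i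
        = {j : Fin N | (j : ℕ) < a} := by
      ext j
      simp only [SimpleGraph.mem_neighborSet, SimpleGraph.fromRel_adj, Set.mem_setOf_eq]
      constructor
      · rintro ⟨hne, h | h⟩
        · exact absurd h hi
        · exact h
      · intro h
        exact ⟨fun he => hi (he ▸ h), Or.inr h⟩
    rw [deg, hset]
    exact Nat.card_eq_of_equiv_fin (finLtEquiv ha)

lemma ramsey : ∀ (n s t : ℕ), s + t ≤ n →
    ∃ N : ℕ, ∀ (M : ℕ) (G : SimpleGraph (Fin M)) (A : Finset (Fin M)), N ≤ A.card →
      (∃ B ⊆ A, G.IsNClique s B) ∨ (∃ B ⊆ A, Gᶜ.IsNClique t B) := by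
  intro n
  induction n with
  | zero =>
    intro s t hst
    refine ⟨0, fun M G A _ => Or.inl ⟨∅, Finset.empty_subset _, ?_⟩⟩
    have hs0 : s = 0 := by omega
    subst hs0
    exact ⟨by simp, rfl⟩
  | succ n ih =>
    intro s t hst
    match s, t with
    | 0, t => exact ⟨0, fun M G A _ => Or.inl ⟨∅, Finset.empty_subset _, ⟨by simp, rfl⟩⟩⟩
    | s+1, 0 => exact ⟨0, fun M G A _ => Or.inr ⟨∅, Finset.empty_subset _, ⟨by simp, rfl⟩⟩⟩
    | s+1, t+1 =>
      obtain ⟨N₁, h₁⟩ := ih s (t+1) (by omega)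
      obtain ⟨N₂, h₂⟩ := ih (s+1) t (by omega)
      refine ⟨N₁ + N₂ + 1, fun M G A hA => ?_⟩
      obtain ⟨v, hv⟩ : A.Nonempty := Finset.card_pos.mp (by omega)
      set A₁ := (A.erase v).filter (fun w => G.Adj v w) with hA₁
      set A₂ := (A.erase v).filter (fun w => ¬ G.Adj v w) with hA₂
      have hsub₁ : A₁ ⊆ A := (Finset.filter_subset _ _).trans (Finset.erase_subset _ _)
      have hsub₂ : A₂ ⊆ A := (Finset.filter_subset _ _).trans (Finset.erase_subset _ _)
      have hcards : A₁.card + A₂.card = (A.erase v).card :=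
        Finset.card_filter_add_card_filter_not _
      have hce : (A.erase v).card = A.card - 1 := Finset.card_erase_of_mem hv
      have hcases : N₁ ≤ A₁.card ∨ N₂ ≤ A₂.card := by omega
      rcases hcases with h | h
      · rcases h₁ M G A₁ h with ⟨B, hB, hcl⟩ | ⟨B, hB, hcl⟩
        · left
          refine ⟨insert v B, Finset.insert_subset hv (hB.trans hsub₁), hcl.insert ?_⟩
          intro b hb
          have hb' := hB hb
          rw [hA₁, Finset.mem_filter] at hb'
          exact hb'.2
        · exact Or.inr ⟨B, hB.trans hsub₁, hcl⟩
      · rcases h₂ M G A₂ h with ⟨B, hB, hcl⟩ | ⟨B, hB, hcl⟩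
        · exact Or.inl ⟨B, hB.trans hsub₂, hcl⟩
        · right
          refine ⟨insert v B, Finset.insert_subset hv (hB.trans hsub₂), hcl.insert ?_⟩
          intro b hb
          have hb' := hB hb
          rw [hA₂, Finset.mem_filter] at hb'
          exact (SimpleGraph.compl_adj _ _ _).mpr ⟨(Finset.ne_of_mem_erase hb'.1).symm, hb'.2⟩

lemma containsCopy_top_of_clique {M n : ℕ} {G : SimpleGraph (Fin M)} {B : Finset (Fin M)}
    (h : G.IsNClique n B) : ContainsCopy G (⊤ : SimpleGraph (Fin n)) := by
  have e : B ≃ Fin n := B.equivFinOfCardEq h.2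
  have hinj : Function.Injective (fun i : Fin n => ((e.symm i : B) : Fin M)) :=
    Subtype.coe_injective.comp e.symm.injective
  refine ⟨⟨fun i => ((e.symm i : B) : Fin M), hinj⟩, fun x y hxy => ?_⟩
  have hne : x ≠ y := hxy.ne
  exact h.1 (Finset.mem_coe.mpr (e.symm x).2) (Finset.mem_coe.mpr (e.symm y).2)
    (fun hh => hne (hinj hh))

lemma containsCopy_trans {U V W : Type} {G : SimpleGraph U} {H : SimpleGraph V}
    {K : SimpleGraph W} (h1 : ContainsCopy G H) (h2 : ContainsCopy H K) :
    ContainsCopy G K := by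
  obtain ⟨f, hf⟩ := h1
  obtain ⟨g, hg⟩ := h2
  exact ⟨g.trans f, fun x y h => hf _ _ (hg x y h)⟩

lemma containsCopy_top_self {t : ℕ} {W : Type} [Fintype W] (H : SimpleGraph W)
    (hcard : Fintype.card W = t) : ContainsCopy (⊤ : SimpleGraph (Fin t)) H := by
  refine ⟨(Fintype.equivFinOfCardEq hcard).toEmbedding, fun x y h => ?_⟩
  exact (SimpleGraph.top_adj _ _).mpr (fun he => h.ne ((Fintype.equivFinOfCardEq hcard).injective he))

lemma deg_comap_rev {N : ℕ} (K : SimpleGraph (Fin N)) (i : Fin N) :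
    deg (K.comap Fin.rev) i = deg K i.rev := by
  unfold deg
  exact Nat.card_congr (Equiv.subtypeEquiv Fin.revPerm (fun j => Iff.rfl))

lemma deg_compl_eq {N : ℕ} (G : SimpleGraph (Fin N)) (v : Fin N) :
    deg Gᶜ v = N - 1 - deg G v := by
  rw [deg_eq_degree, deg_eq_degree, SimpleGraph.degree_compl, Fintype.card_fin]

lemma ramsey_mem {t s : ℕ} {W : Type} [Fintype W] (H : SimpleGraph W)
    (hcard : Fintype.card W = t) :
    ∃ N₀ : ℕ, ∀ π : Fin N₀ → ℕ, Antitone π → Graphic π →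
      PotentiallyGraphic π (⊤ : SimpleGraph (Fin s)) ∨ PotentiallyGraphic (compSeq π) H := by
  obtain ⟨N₀, hN₀⟩ := ramsey (s + t) s t le_rfl
  refine ⟨max N₀ 1, fun π _ hgr => ?_⟩
  obtain ⟨G, hG⟩ := hgr
  rcases hN₀ (max N₀ 1) G Finset.univ (by simp) with ⟨B, _, hcl⟩ | ⟨B, _, hcl⟩
  · exact Or.inl ⟨G, hG, containsCopy_top_of_clique hcl⟩
  · right
    refine ⟨Gᶜ.comap Fin.rev, fun i => ?_, ?_⟩
    · rw [deg_comap_rev, deg_compl_eq, hG, compSeq]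
    · refine containsCopy_trans (H := Gᶜ) ?_
        (containsCopy_trans (containsCopy_top_of_clique hcl) (containsCopy_top_self H hcard))
      refine ⟨⟨Fin.rev, Fin.rev_injective⟩, fun x y hxy => ?_⟩
      show (Gᶜ.comap Fin.rev).Adj x.rev y.rev
      simpa [SimpleGraph.comap, Fin.rev_rev] using hxy

/-- Lower bound: for H of order t with no isolated vertices and s ≥ 2,
r_pot(K_s, H) ≥ t + s - 2; the degree sequence of K_{s-2} ∨ (t-1)·K_1 is the witness. -/
theorem rpot_lower_bound {t s : ℕ} {W : Type} [Fintype W] (H : SimpleGraph W)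
    (hcard : Fintype.card W = t) (ht : 1 ≤ t) (hs : 2 ≤ s)
    (hiso : ∀ v : W, 0 < deg H v) :
    t + s - 2 ≤ rpot (⊤ : SimpleGraph (Fin s)) H ∧
    ¬ PotentiallyGraphic
        (fun i : Fin (t + s - 3) => if (i : ℕ) < s - 2 then t + s - 4 else s - 2)
        (⊤ : SimpleGraph (Fin s)) ∧
    ¬ PotentiallyGraphic
        (compSeq (fun i : Fin (t + s - 3) => if (i : ℕ) < s - 2 then t + s - 4 else s - 2))
        H := by
  have hts : s - 2 ≤ t + s - 3 := by omega
  have hfun : (fun i : Fin (t + s - 3) => if (i : ℕ) < s - 2 then t + s - 4 else s - 2)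
      = (fun i : Fin (t + s - 3) => if (i : ℕ) < s - 2 then (t + s - 3) - 1 else s - 2) := by
    funext i
    by_cases h : (i : ℕ) < s - 2
    · rw [if_pos h, if_pos h]; omega
    · rw [if_neg h, if_neg h]
  refine ⟨?_, ?_, ?_⟩
  · obtain ⟨N₀, hN₀⟩ := ramsey_mem (s := s) H hcard
    rw [rpot]
    refine le_csInf ⟨N₀, hN₀⟩ fun N hN => ?_
    simp only [Set.mem_setOf_eq] at hN
    by_contra hcon
    push_neg at hcon
    have hNle : N ≤ t + s - 3 := by omega
    have ha2 : min (s - 2) N ≤ N := min_le_right _ _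
    have ha1 : min (s - 2) N ≤ s - 2 := min_le_left _ _
    have ha3 : min (s - 2) N = s - 2 ∨ min (s - 2) N = N := by
      rcases le_total (s - 2) N with h | h
      · exact Or.inl (min_eq_left h)
      · exact Or.inr (min_eq_right h)
    rcases hN _ (antitone_pi (N := N) (a := min (s - 2) N)) (graphic_pi ha2) with h | h
    · exact not_pot_Ks hs ha1 h
    · exact not_pot_H hcard ht hs hiso hNle ha1 ha2 ha3 h
  · rw [hfun]
    exact not_pot_Ks hs le_rfl
  · rw [hfun]
    exact not_pot_H hcard ht hs hiso le_rfl le_rfl hts (Or.inl rfl)
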